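/- For all natural numbers m, k, n ≥ 1 and d ≥ 1, one has the identity of R-linear endomorphisms of R[t]: (ad E^n)^d(P_{m,k}) = Σ_{i≥d} (−1)^{i−d} · i! · C(m,i) · A_d(i,n) · h^i · P_{m−i, k+nd−i}, where (ad X)(Y) = X∘Y − Y∘X and the sum is finite (terms vanish unless d ≤ i ≤ min(m, nd)). Note E^n = P_{0,n}. This is the first iterated-adjoint formula in the proof of Lemma 3.1 (div-sum-lem(ii)) realized concretely. -/

import Mathlib

open Polynomial

/-- `E = h·D`, the `R`-linear endomorphism `f ↦ h · D f` of `R[t]`,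
where `D` is the formal derivative. -/
noncomputable def Eop (R : Type*) [CommRing R] (h : R) : Module.End R (Polynomial R) :=
  (LinearMap.mulLeft R (C h)).comp Polynomial.derivative

/-- `P_{m,k}(f) = E^k (t^m · f)`. -/
noncomputable def Pop (R : Type*) [CommRing R] (h : R) (m k : ℕ) :
    Module.End R (Polynomial R) :=
  (Eop R h ^ k).comp (LinearMap.mulLeft R (X ^ m))

/-- `A_d(i,n) = Σ_{i₁+⋯+i_d = i, each i_s ≥ 1} C(n,i₁)⋯C(n,i_d)`, the sum over all
`d`-tuples of positive integers summing to `i` of products of binomial coefficients. -/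
def Acoef (d i n : ℕ) : ℕ :=
  ∑ f ∈ (Finset.Nat.antidiagonalTuple d i).filter (fun f => ∀ s, 1 ≤ f s),
    ∏ s, n.choose (f s)

/- ### Auxiliary combinatorial lemmas -/

lemma Acoef_eq_zero_of_lt {d i : ℕ} (n : ℕ) (hlt : i < d) : Acoef d i n = 0 := by
  rw [Acoef]
  apply Finset.sum_eq_zero
  intro f hf
  rw [Finset.mem_filter, Finset.Nat.mem_antidiagonalTuple] at hf
  obtain ⟨hsum, hpos⟩ := hf
  exfalso
  have : (Finset.univ : Finset (Fin d)).card • 1 ≤ ∑ s, f s :=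
    Finset.card_nsmul_le_sum _ _ _ (fun s _ => hpos s)
  simp [hsum] at this
  omega

lemma Acoef_eq_zero_of_gt {d i n : ℕ} (hgt : n * d < i) : Acoef d i n = 0 := by
  rw [Acoef]
  apply Finset.sum_eq_zero
  intro f hf
  rw [Finset.mem_filter, Finset.Nat.mem_antidiagonalTuple] at hf
  obtain ⟨hsum, hpos⟩ := hf
  have : ∃ s, n < f s := by
    by_contra hc
    push_neg at hc
    have : ∑ s, f s ≤ (Finset.univ : Finset (Fin d)).card • n :=
      Finset.sum_le_card_nsmul _ _ _ (fun s _ => hc s)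
    simp [hsum] at this
    have : i ≤ n * d := by simpa [mul_comm] using this
    omega
  obtain ⟨s, hs⟩ := this
  exact Finset.prod_eq_zero (Finset.mem_univ s) (Nat.choose_eq_zero_of_lt hs)

lemma Acoef_one {i : ℕ} (n : ℕ) (hi : 1 ≤ i) : Acoef 1 i n = n.choose i := by
  rw [Acoef, Finset.Nat.antidiagonalTuple_one]
  rw [Finset.filter_singleton]
  simp only [Fin.forall_fin_one]
  rw [if_pos (by simpa using hi)]
  simp

lemma Acoef_succ (d l n : ℕ) :
    Acoef (d+1) l n = ∑ j ∈ Finset.Icc 1 l, n.choose j * Acoef d (l-j) n := by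
  simp_rw [Acoef, Finset.mul_sum]
  rw [Finset.sum_sigma']
  refine Finset.sum_nbij' (fun g => ⟨g (Fin.last d), Fin.init g⟩)
    (fun p => Fin.snoc p.2 p.1) ?_ ?_ ?_ ?_ ?_
  · intro g hg
    rw [Finset.mem_filter, Finset.Nat.mem_antidiagonalTuple] at hg
    obtain ⟨hsum, hpos⟩ := hg
    rw [Finset.mem_sigma, Finset.mem_Icc, Finset.mem_filter,
      Finset.Nat.mem_antidiagonalTuple]
    refine ⟨⟨hpos _, ?_⟩, ?_, fun s => hpos _⟩
    · calc g (Fin.last d) ≤ ∑ s, g s :=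
          Finset.single_le_sum (fun s _ => Nat.zero_le _) (Finset.mem_univ _)
        _ = l := hsum
    · dsimp only
      rw [Fin.sum_univ_castSucc] at hsum
      have hinit : ∑ i : Fin d, Fin.init g i = ∑ i : Fin d, g i.castSucc :=
        Finset.sum_congr rfl (fun i _ => rfl)
      omega
  · intro p hp
    rw [Finset.mem_sigma, Finset.mem_Icc, Finset.mem_filter,
      Finset.Nat.mem_antidiagonalTuple] at hp
    obtain ⟨⟨h1, h2⟩, hsum, hpos⟩ := hp
    rw [Finset.mem_filter, Finset.Nat.mem_antidiagonalTuple]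
    constructor
    · rw [Fin.sum_univ_castSucc]
      simp only [Fin.snoc_castSucc, Fin.snoc_last]
      rw [hsum]; omega
    · intro s
      refine Fin.lastCases ?_ ?_ s
      · rw [Fin.snoc_last]; exact h1
      · intro i; rw [Fin.snoc_castSucc]; exact hpos i
  · intro g hg
    exact Fin.snoc_init_self g
  · intro p hp
    ext : 1
    · simp
    · simp
  · intro g hg
    rw [Fin.prod_univ_castSucc]
    rw [mul_comm]
    congr 1

lemma fact_chain (m i j : ℕ) :
    i.factorial * j.factorial * (m.choose i) * ((m-i).choose j) =
      (i+j).factorial * (m.choose (i+j)) := by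
  rcases le_or_gt (i+j) m with hle | hlt
  · have hi : i ≤ m := by omega
    have hj : j ≤ m - i := by omega
    apply Nat.eq_of_mul_eq_mul_right (Nat.factorial_pos (m - (i+j)))
    have e1 := Nat.choose_mul_factorial_mul_factorial hi
    have e2 := Nat.choose_mul_factorial_mul_factorial hj
    have e3 := Nat.choose_mul_factorial_mul_factorial hle
    rw [Nat.sub_sub] at e2
    calc i.factorial * j.factorial * m.choose i * ((m-i).choose j) * (m-(i+j)).factorial
        = (m.choose i * i.factorial) * ((m-i).choose j * j.factorial * (m-(i+j)).factorial) := by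
          ring
      _ = (m.choose i * i.factorial) * (m-i).factorial := by rw [e2]
      _ = m.factorial := by rw [← e1]
      _ = (i+j).factorial * m.choose (i+j) * (m-(i+j)).factorial := by rw [← e3]; ring
  · rcases le_or_gt i m with hi | hi
    · have : m - i < j := by omega
      rw [Nat.choose_eq_zero_of_lt this, Nat.choose_eq_zero_of_lt hlt]
      simp
    · rw [Nat.choose_eq_zero_of_lt hi, Nat.choose_eq_zero_of_lt (by omega : m < i + j)]
      simp

lemma AclaimA {d : ℕ} (l n : ℕ) (hd : 1 ≤ d) :
    ∑ p ∈ ((Finset.Icc d (n*d)) ×ˢ (Finset.Icc 1 n)).filter (fun p => p.1 + p.2 = l),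
      Acoef d p.1 n * n.choose p.2 = Acoef (d+1) l n := by
  rw [Acoef_succ]
  rw [← Finset.sum_filter_of_ne (p := fun j => d ≤ l - j ∧ l - j ≤ n*d ∧ j ≤ n)
    (f := fun j => n.choose j * Acoef d (l-j) n) ?_]
  · refine Finset.sum_nbij' (fun p => p.2) (fun j => (l-j, j)) ?_ ?_ ?_ ?_ ?_
    · intro p hp
      simp only [Finset.mem_filter, Finset.mem_product, Finset.mem_Icc] at hp ⊢
      omega
    · intro j hj
      simp only [Finset.mem_filter, Finset.mem_Icc, Finset.mem_product] at hj ⊢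
      omega
    · intro p hp
      simp only [Finset.mem_filter, Finset.mem_product, Finset.mem_Icc] at hp
      have h1 : l - p.2 = p.1 := by omega
      exact Prod.ext h1 rfl
    · intro j hj
      rfl
    · intro p hp
      simp only [Finset.mem_filter, Finset.mem_product, Finset.mem_Icc] at hp
      have h1 : l - p.2 = p.1 := by omega
      rw [h1, mul_comm]
  · intro j hj hne
    constructor
    · by_contra hc
      push_neg at hc
      rw [Acoef_eq_zero_of_lt n hc, mul_zero] at hne
      exact hne rfl
    constructor
    · by_contra hc
      push_neg at hc
      rw [Acoef_eq_zero_of_gt hc, mul_zero] at hne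
      exact hne rfl
    · by_contra hc
      push_neg at hc
      rw [Nat.choose_eq_zero_of_lt hc, zero_mul] at hne
      exact hne rfl

lemma key_scalar (m n d l : ℕ) (hd : 1 ≤ d) (hl : l ∈ Finset.Icc (d+1) (n*(d+1))) :
    ∑ p ∈ ((Finset.Icc d (n*d)) ×ˢ (Finset.Icc 1 n)).filter (fun p => p.1 + p.2 = l),
      (((-1 : ℤ)^(p.1-d) * (p.1.factorial : ℤ) * (m.choose p.1 : ℤ) * (Acoef d p.1 n : ℤ)) *
       ((-1 : ℤ)^(p.2-1) * (n.choose p.2 : ℤ) * (p.2.factorial : ℤ) * ((m-p.1).choose p.2 : ℤ)))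
    = (-1 : ℤ)^(l-(d+1)) * (l.factorial : ℤ) * (m.choose l : ℤ) * (Acoef (d+1) l n : ℤ) := by
  rw [← AclaimA l n hd]
  push_cast
  rw [Finset.mul_sum]
  refine Finset.sum_congr rfl fun p hp => ?_
  simp only [Finset.mem_filter, Finset.mem_product, Finset.mem_Icc] at hp
  obtain ⟨⟨⟨hid, hind⟩, hj1, hjn⟩, hsum⟩ := hp
  have hsign : (-1 : ℤ)^(p.1-d) * (-1 : ℤ)^(p.2-1) = (-1 : ℤ)^(l-(d+1)) := by
    rw [← pow_add]
    congr 1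
    omega
  have hfact : (p.1.factorial : ℤ) * (p.2.factorial : ℤ) * (m.choose p.1 : ℤ) *
      ((m-p.1).choose p.2 : ℤ) = (l.factorial : ℤ) * (m.choose l : ℤ) := by
    have := fact_chain m p.1 p.2
    rw [hsum] at this
    exact_mod_cast congrArg (Nat.cast : ℕ → ℤ) this
  linear_combination ((p.1.factorial : ℤ) * (p.2.factorial : ℤ) * (m.choose p.1 : ℤ) *
      ((m-p.1).choose p.2 : ℤ) * (Acoef d p.1 n : ℤ) * (n.choose p.2 : ℤ)) * hsign
    + ((-1 : ℤ)^(l-(d+1)) * (Acoef d p.1 n : ℤ) * (n.choose p.2 : ℤ)) * hfact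

/- ### Auxiliary operator lemmas -/

section Operators

variable {R : Type*} [CommRing R] (h : R)

lemma Mstep (m : ℕ) :
    (LinearMap.mulLeft R ((X : R[X]) ^ m)) * Eop R h =
      Eop R h * LinearMap.mulLeft R (X ^ m)
        - ((m : R) * h) • LinearMap.mulLeft R (X ^ (m - 1)) := by
  apply LinearMap.ext
  intro f
  simp only [LinearMap.sub_apply, LinearMap.smul_apply, Module.End.mul_apply,
    LinearMap.mulLeft_apply, Eop, LinearMap.comp_apply, derivative_mul,
    derivative_X_pow, smul_eq_C_mul, map_mul, map_natCast]
  ring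

lemma pow_Eop_mul_Pop (j m k : ℕ) :
    Eop R h ^ j * Pop R h m k = Pop R h m (k + j) := by
  rw [Pop, Pop, ← Module.End.mul_eq_comp, ← Module.End.mul_eq_comp, ← mul_assoc,
    ← pow_add, add_comm j k]

lemma Pop_mul_Eop (m k : ℕ) :
    Pop R h m k * Eop R h =
      Pop R h m (k + 1) - ((m : R) * h) • Pop R h (m - 1) k := by
  rw [Pop, Pop, Pop, ← Module.End.mul_eq_comp, ← Module.End.mul_eq_comp,
    ← Module.End.mul_eq_comp, mul_assoc, Mstep, mul_sub, mul_smul_comm,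
    ← mul_assoc, ← pow_succ]

lemma fact_choose_succ (m j : ℕ) :
    (j+1).factorial * m.choose (j+1) = j.factorial * m.choose j * (m - j) := by
  rw [Nat.factorial_succ,
    show (j+1) * j.factorial * m.choose (j+1) = j.factorial * (m.choose (j+1) * (j+1)) by ring,
    Nat.choose_succ_right_eq]
  ring

lemma commE (m k n : ℕ) :
    Pop R h m k * Eop R h ^ n =
      ∑ j ∈ Finset.range (n+1),
        ((-1 : ℤ)^j * (n.choose j) * (j.factorial) * (m.choose j)) •
          (h ^ j • Pop R h (m - j) (k + n - j)) := by
  induction n with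
  | zero => simp
  | succ n ih =>
    have step : Pop R h m k * Eop R h ^ (n+1)
        = ∑ j ∈ Finset.range (n+1),
            (((-1 : ℤ)^j * (n.choose j) * (j.factorial) * (m.choose j)) •
              (h ^ j • Pop R h (m-j) (k+n-j+1))
            - ((((-1 : ℤ)^j * (n.choose j) * (j.factorial) * (m.choose j)) * ((m-j : ℕ) : ℤ))) •
              (h ^ (j+1) • Pop R h (m-j-1) (k+n-j))) := by
      rw [pow_succ, ← mul_assoc, ih, Finset.sum_mul]
      refine Finset.sum_congr rfl fun j hj => ?_
      rw [smul_mul_assoc, smul_mul_assoc, Pop_mul_Eop, smul_sub, smul_sub]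
      congr 1
      rw [smul_smul (h^j), show h^j * (((m-j : ℕ) : R) * h) = ((m-j : ℕ) : R) * h^(j+1) by ring,
        mul_smul ((m-j : ℕ) : R) (h^(j+1)), Nat.cast_smul_eq_nsmul, ← natCast_zsmul, smul_smul]
    rw [step, Finset.sum_sub_distrib]
    have e1 : ∑ j ∈ Finset.range (n+1),
        (((-1 : ℤ)^j * (n.choose j) * (j.factorial) * (m.choose j)) •
          (h ^ j • Pop R h (m-j) (k+n-j+1)))
        = ∑ j ∈ Finset.range (n+2),
        (((-1 : ℤ)^j * (n.choose j) * (j.factorial) * (m.choose j)) •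
          (h ^ j • Pop R h (m-j) (k+(n+1)-j))) := by
      conv_rhs => rw [Finset.sum_range_succ]
      rw [Nat.choose_succ_self]
      push_cast
      rw [mul_zero, zero_mul, zero_mul, zero_smul, add_zero]
      refine Finset.sum_congr rfl fun j hj => ?_
      have : k + n - j + 1 = k + (n+1) - j := by
        have := Finset.mem_range.mp hj; omega
      rw [this]
    rw [e1, sub_eq_iff_eq_add', ← sub_eq_iff_eq_add, ← Finset.sum_sub_distrib]
    rw [Finset.sum_range_succ' (fun j =>
      ((-1 : ℤ)^j * (n.choose j) * (j.factorial) * (m.choose j)) •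
          (h ^ j • Pop R h (m-j) (k+(n+1)-j))
      - ((-1 : ℤ)^j * ((n+1).choose j) * (j.factorial) * (m.choose j)) •
          (h ^ j • Pop R h (m-j) (k+(n+1)-j)))]
    simp only [Nat.choose_zero_right, pow_zero]
    rw [sub_self, add_zero]
    refine Finset.sum_congr rfl fun j hj => ?_
    rw [← sub_smul]
    have hj' : j ≤ n := by have := Finset.mem_range.mp hj; omega
    have harith : k + (n+1) - (j+1) = k + n - j := by omega
    have hsub : m - (j+1) = m - j - 1 := by omega
    rw [harith, hsub]
    congr 1
    have hpas : (n+1).choose (j+1) = n.choose j + n.choose (j+1) := Nat.choose_succ_succ n j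
    have hfc := fact_choose_succ m j
    have : ((j+1).factorial : ℤ) * m.choose (j+1) = (j.factorial : ℤ) * m.choose j * ((m - j : ℕ) : ℤ) := by
      exact_mod_cast congrArg (Nat.cast : ℕ → ℤ) hfc
    rw [hpas]
    push_cast [pow_succ]
    linear_combination ((n.choose j : ℤ) * (-1:ℤ)^j) * this

lemma adstep (m k n : ℕ) :
    Eop R h ^ n * Pop R h m k - Pop R h m k * Eop R h ^ n =
      ∑ j ∈ Finset.Icc 1 n,
        ((-1 : ℤ)^(j-1) * (n.choose j) * (j.factorial) * (m.choose j)) •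
          (h ^ j • Pop R h (m - j) (k + n - j)) := by
  rw [pow_Eop_mul_Pop, commE]
  have hset : Finset.range (n+1) = insert 0 (Finset.Icc 1 n) := by
    ext x; simp [Finset.mem_range, Finset.mem_Icc, Finset.mem_insert]; omega
  rw [hset, Finset.sum_insert (by simp)]
  simp only [pow_zero, Nat.choose_zero_right, Nat.factorial_zero, Nat.sub_zero, Nat.add_sub_cancel]
  rw [show ((1:ℤ) * ((1:ℕ):ℤ) * ((1:ℕ):ℤ) * ((1:ℕ):ℤ)) = 1 by norm_num, one_smul, one_smul,
    sub_add_eq_sub_sub, sub_self, zero_sub, ← Finset.sum_neg_distrib]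
  refine Finset.sum_congr rfl fun j hj => ?_
  have hj1 : 1 ≤ j := (Finset.mem_Icc.mp hj).1
  rw [← neg_smul]
  congr 1
  have hs : (-1 : ℤ)^j = -(-1)^(j-1) := by
    conv_lhs => rw [show j = (j-1)+1 by omega]
    rw [pow_succ]; ring
  rw [hs]; ring

lemma zsmul_sub' (c : ℤ) (w v : Module.End R (Polynomial R)) :
    c • w - c • v = c • (w - v) := (smul_sub c w v).symm

lemma rsmul_sub' (c : R) (w v : Module.End R (Polynomial R)) :
    c • w - c • v = c • (w - v) := (smul_sub c w v).symm

lemma smul_juggle (c z : ℤ) (a b : R) (P : Module.End R (Polynomial R)) :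
    c • (a • (z • (b • P))) = (c*z) • ((a*b) • P) := by
  rw [smul_comm a z, smul_smul, smul_smul a b]

end Operators

/- ### The main theorem -/

theorem stmt3' (R : Type*) [CommRing R] (h : R) (m k n d : ℕ) (hn : 1 ≤ n) (hd : 1 ≤ d) :
    (fun Y => Eop R h ^ n * Y - Y * Eop R h ^ n)^[d] (Pop R h m k) =
      ∑ i ∈ Finset.Icc d (n * d),
        ((-1 : ℤ) ^ (i - d) * (i.factorial : ℤ) * (m.choose i : ℤ) * (Acoef d i n : ℤ)) •
          (h ^ i • Pop R h (m - i) (k + n * d - i)) := by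
  induction d, hd using Nat.le_induction with
  | base =>
    rw [Function.iterate_one]
    show Eop R h ^ n * Pop R h m k - Pop R h m k * Eop R h ^ n = _
    rw [adstep, mul_one]
    refine Finset.sum_congr rfl fun i hi => ?_
    have hi1 : 1 ≤ i := (Finset.mem_Icc.mp hi).1
    rw [Acoef_one n hi1]
    congr 1
    ring
  | succ d hd ih =>
    rw [Function.iterate_succ_apply', ih]
    have main : Eop R h ^ n * (∑ i ∈ Finset.Icc d (n * d),
        ((-1 : ℤ) ^ (i - d) * (i.factorial : ℤ) * (m.choose i : ℤ) * (Acoef d i n : ℤ)) •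
          (h ^ i • Pop R h (m - i) (k + n * d - i)))
      - (∑ i ∈ Finset.Icc d (n * d),
        ((-1 : ℤ) ^ (i - d) * (i.factorial : ℤ) * (m.choose i : ℤ) * (Acoef d i n : ℤ)) •
          (h ^ i • Pop R h (m - i) (k + n * d - i))) * Eop R h ^ n
      = ∑ i ∈ Finset.Icc d (n * d), ∑ j ∈ Finset.Icc 1 n,
          ((((-1 : ℤ) ^ (i - d) * (i.factorial : ℤ) * (m.choose i : ℤ) * (Acoef d i n : ℤ)) *
            ((-1 : ℤ)^(j-1) * (n.choose j : ℤ) * (j.factorial : ℤ) * ((m-i).choose j : ℤ))) •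
            (h ^ (i+j) • Pop R h (m - (i+j)) (k + n * (d+1) - (i+j)))) := by
      rw [Finset.mul_sum, Finset.sum_mul, ← Finset.sum_sub_distrib]
      refine Finset.sum_congr rfl fun i hi => ?_
      simp only [Finset.mem_Icc] at hi
      rw [mul_smul_comm, smul_mul_assoc, zsmul_sub', mul_smul_comm, smul_mul_assoc, rsmul_sub',
        adstep, Finset.smul_sum, Finset.smul_sum]
      refine Finset.sum_congr rfl fun j hj => ?_
      simp only [Finset.mem_Icc] at hj
      rw [show m - i - j = m - (i+j) from by omega,
        show k + n*d - i + n - j = k + n*(d+1) - (i+j) from by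
          have h1 : i ≤ n*d := hi.2
          have h2 : j ≤ n := hj.2
          have hmul : n*(d+1) = n*d + n := by ring
          omega]
      rw [smul_juggle, ← pow_add]
    rw [main, ← Finset.sum_product']
    have hmaps : ∀ p ∈ (Finset.Icc d (n*d)) ×ˢ (Finset.Icc 1 n),
        p.1 + p.2 ∈ Finset.Icc (d+1) (n*(d+1)) := by
      intro p hp
      simp only [Finset.mem_product, Finset.mem_Icc] at hp ⊢
      constructor
      · omega
      · have := hp.1.2; have := hp.2.2; nlinarith
    rw [← Finset.sum_fiberwise_of_maps_to hmaps]
    refine Finset.sum_congr rfl fun l hl => ?_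
    have step2 : ∀ p ∈ ((Finset.Icc d (n*d)) ×ˢ (Finset.Icc 1 n)).filter
        (fun p => p.1 + p.2 = l),
        ((((-1 : ℤ) ^ (p.1 - d) * (p.1.factorial : ℤ) * (m.choose p.1 : ℤ) * (Acoef d p.1 n : ℤ)) *
            ((-1 : ℤ)^(p.2-1) * (n.choose p.2 : ℤ) * (p.2.factorial : ℤ) * ((m-p.1).choose p.2 : ℤ))) •
            (h ^ (p.1+p.2) • Pop R h (m - (p.1+p.2)) (k + n * (d+1) - (p.1+p.2))))
        = ((((-1 : ℤ) ^ (p.1 - d) * (p.1.factorial : ℤ) * (m.choose p.1 : ℤ) * (Acoef d p.1 n : ℤ)) *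
            ((-1 : ℤ)^(p.2-1) * (n.choose p.2 : ℤ) * (p.2.factorial : ℤ) * ((m-p.1).choose p.2 : ℤ))) •
            (h ^ l • Pop R h (m - l) (k + n * (d+1) - l))) := by
      intro p hp
      rw [Finset.mem_filter] at hp
      rw [hp.2]
    rw [Finset.sum_congr rfl step2, ← Finset.sum_smul, key_scalar m n d l hd hl]

theorem stmt3 (R : Type*) [CommRing R] (h : R) (m k n d : ℕ) (hn : 1 ≤ n) (hd : 1 ≤ d) :
    (fun Y => Eop R h ^ n * Y - Y * Eop R h ^ n)^[d] (Pop R h m k) =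
      ∑ i ∈ Finset.Icc d (m + n * d),
        ((-1 : ℤ) ^ (i - d) * (i.factorial : ℤ) * (m.choose i : ℤ) * (Acoef d i n : ℤ)) •
          (h ^ i • Pop R h (m - i) (k + n * d - i)) := by
  rw [stmt3' R h m k n d hn hd]
  apply Finset.sum_subset
  · exact Finset.Icc_subset_Icc le_rfl (by omega)
  · intro i hi hni
    simp only [Finset.mem_Icc] at hi hni
    have : n * d < i := by omega
    rw [Acoef_eq_zero_of_gt this]
    push_cast
    rw [mul_zero, zero_smul]
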